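/- The infinite family of noisy qubit spin observables {S^n_{1/2} : n a unit vector in ℝ³}, where S^n_{1/2}(±) = ½(1 ± ½ n·σ), is compatible: each S^n_{1/2} is a postprocessing of the continuous spin-direction POVM D(X) = (1/4π)∫_X (1 + k·σ)dk on the unit sphere, via the kernel f_n(±,k) = 1 if ±k·n > 0 and 0 otherwise. -/

import Mathlib

open scoped BigOperators ComplexOrder Real
open Matrix MeasureTheory

abbrev Mat2 := Matrix (Fin 2) (Fin 2) ℂ

attribute [local instance] Matrix.frobeniusNormedAddCommGroup Matrix.frobeniusNormedSpace

noncomputable def sigmaX : Mat2 := !![0, 1; 1, 0]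
noncomputable def sigmaY : Mat2 := !![0, -Complex.I; Complex.I, 0]
noncomputable def sigmaZ : Mat2 := !![1, 0; 0, -1]

/-- `k·σ` for a vector `k ∈ ℝ³`. -/
noncomputable def dotSigma (k : EuclideanSpace ℝ (Fin 3)) : Mat2 :=
  ((k 0 : ℂ)) • sigmaX + ((k 1 : ℂ)) • sigmaY + ((k 2 : ℂ)) • sigmaZ

/-- The surface measure on the unit sphere `S² ⊂ ℝ³` (total mass `4π`). -/
noncomputable def sphereMeasure :
    Measure (Metric.sphere (0 : EuclideanSpace ℝ (Fin 3)) 1) :=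
  (volume : Measure (EuclideanSpace ℝ (Fin 3))).toSphere

/-- The postprocessing kernel `f_n(±, k) = 1` if `± k·n > 0`, else `0`. -/
noncomputable def fKernel (nv : EuclideanSpace ℝ (Fin 3)) (ε : Bool)
    (k : Metric.sphere (0 : EuclideanSpace ℝ (Fin 3)) 1) : ℝ :=
  if (if ε then (0 : ℝ) < inner ℝ (k : EuclideanSpace ℝ (Fin 3)) nv
      else (inner ℝ (k : EuclideanSpace ℝ (Fin 3)) nv : ℝ) < 0) then 1 else 0

section Aux
open scoped RealInnerProductSpace
open Set Filter Topology Metric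

abbrev E3 := EuclideanSpace ℝ (Fin 3)


lemma hasDeriv1' (t : ℝ) : HasDerivAt (fun t : ℝ => -Real.exp (-t^2) / 2) (t * Real.exp (-t^2)) t := by
  have h1 : HasDerivAt (fun t : ℝ => -t^2) (-(2*t)) t := by
    simpa [Pi.neg_def] using ((hasDerivAt_pow 2 t).neg)
  have h2 := (Real.hasDerivAt_exp (-t^2)).comp t h1
  have h3 := (h2.neg).div_const 2
  exact h3.congr_deriv (by ring)

lemma hasDeriv2' (t : ℝ) : HasDerivAt (fun t : ℝ => -(t * Real.exp (-t^2)) / 2)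
    (t^2 * Real.exp (-t^2) - Real.exp (-t^2) / 2) t := by
  have e : HasDerivAt (fun t:ℝ => Real.exp (-t^2)) (Real.exp (-t^2) * -(2*t)) t := by
    have h1 : HasDerivAt (fun t : ℝ => -t^2) (-(2*t)) t := by
      simpa [Pi.neg_def] using ((hasDerivAt_pow 2 t).neg)
    exact (Real.hasDerivAt_exp (-t^2)).comp t h1
  have h2 := (((hasDerivAt_id t).mul e).neg).div_const 2
  exact h2.congr_deriv (by simp only [id]; ring)

lemma int_sq : IntegrableOn (fun t : ℝ => t^2 * Real.exp (-t^2)) (Ioi 0) := by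
  have h := integrableOn_rpow_mul_exp_neg_mul_sq (b := 1) one_pos (s := 2) (by norm_num)
  refine h.congr_fun (fun x hx => ?_) measurableSet_Ioi
  beta_reduce
  rw [show ((2:ℝ) = ((2:ℕ):ℝ)) by norm_num, Real.rpow_natCast]
  norm_num

lemma tend_t : Tendsto (fun t : ℝ => -(t * Real.exp (-t^2)) / 2) atTop (𝓝 0) := by
  have h := (tendsto_rpow_mul_exp_neg_mul_atTop_nhds_zero (1/2) 1 one_pos).comp
    (tendsto_pow_atTop (n := 2) two_ne_zero)
  have h2 : Tendsto (fun t : ℝ => t * Real.exp (-t^2)) atTop (𝓝 0) := by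
    apply h.congr'
    filter_upwards [eventually_ge_atTop (0:ℝ)] with t ht
    simp only [Function.comp]
    rw [show ((t:ℝ)^2) = t^((2:ℕ):ℝ) by rw [Real.rpow_natCast], ← Real.rpow_mul ht]
    norm_num
  have := (h2.neg).div_const 2
  simpa using this

lemma gauss_sq_Ioi : ∫ t in Ioi (0:ℝ), t^2 * Real.exp (-t^2) = √π/4 := by
  have gI : ∫ t in Ioi (0:ℝ), Real.exp (-t^2) = √π / 2 := by
    have := integral_gaussian_Ioi 1; simpa using this
  have intexp : IntegrableOn (fun t : ℝ => Real.exp (-t^2)) (Ioi 0) := by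
    have := (integrable_exp_neg_mul_sq (b := 1) one_pos).integrableOn (s := Ioi 0)
    simpa using this
  have key := integral_Ioi_of_hasDerivAt_of_tendsto
    (f := fun t : ℝ => -(t * Real.exp (-t^2)) / 2)
    (f' := fun t => t^2 * Real.exp (-t^2) - Real.exp (-t^2) / 2) (a := 0) (m := 0)
    (Continuous.continuousWithinAt (by continuity))
    (fun x _ => hasDeriv2' x)
    (int_sq.sub (intexp.div_const 2))
    tend_t
  rw [integral_sub int_sq (intexp.div_const 2), integral_div, gI] at key
  norm_num at key
  linarith

lemma polar_transfer (f : sphere (0:E3) 1 → ℝ) (h : ℝ → ℝ) (G : E3 → ℝ)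
    (hG : ∀ x : ({(0:E3)}ᶜ : Set E3),
      G x = f ((homeomorphUnitSphereProd E3) x).1 * h ‖(x:E3)‖) :
    ∫ x, G x = (∫ k, f k ∂(volume : Measure E3).toSphere) * ∫ r in Ioi (0:ℝ), r^2 * h r := by
  have h3 : Module.finrank ℝ E3 - 1 = 2 := by rw [finrank_euclideanSpace_fin]
  have MP := (volume : Measure E3).measurePreserving_homeomorphUnitSphereProd
  rw [h3] at MP
  have step1 : ∫ x, G x = ∫ x : ({(0:E3)}ᶜ : Set E3), G x ∂(Measure.comap Subtype.val volume) := by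
    rw [integral_subtype_comap (measurableSet_singleton _).compl,
      restrict_compl_singleton]
  have step2 : ∫ x : ({(0:E3)}ᶜ : Set E3), G x ∂(Measure.comap Subtype.val volume)
      = ∫ p : sphere (0:E3) 1 × Ioi (0:ℝ), f p.1 * h p.2
          ∂((volume : Measure E3).toSphere.prod (Measure.volumeIoiPow 2)) := by
    rw [← MP.integral_comp (Homeomorph.measurableEmbedding _) (fun p => f p.1 * h p.2.1)]
    exact integral_congr_ae (ae_of_all _ fun x => by simp only [hG x, homeomorphUnitSphereProd_apply_snd_coe])
  have step3 : ∫ p : sphere (0:E3) 1 × Ioi (0:ℝ), f p.1 * h p.2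
          ∂((volume : Measure E3).toSphere.prod (Measure.volumeIoiPow 2))
      = (∫ k, f k ∂(volume : Measure E3).toSphere) * ∫ r : Ioi (0:ℝ), h r ∂(Measure.volumeIoiPow 2) :=
    integral_prod_mul f (fun r : Ioi (0:ℝ) => h r)
  have step4 : ∫ r : Ioi (0:ℝ), h r ∂(Measure.volumeIoiPow 2) = ∫ r in Ioi (0:ℝ), r^2 * h r := by
    simp only [Measure.volumeIoiPow, ENNReal.ofReal]
    rw [integral_withDensity_eq_integral_smul
      ((measurable_subtype_coe.pow_const _).real_toNNReal) (fun r : Ioi (0:ℝ) => h r),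
      integral_subtype_comap measurableSet_Ioi (fun a : ℝ => Real.toNNReal (a^2) • h a)]
    refine setIntegral_congr_fun measurableSet_Ioi (fun x hx => ?_)
    rw [NNReal.smul_def, Real.coe_toNNReal _ (sq_nonneg x), smul_eq_mul]
  rw [step1, step2, step3, step4]

noncomputable def gE : ℝ → ℝ := fun t => Real.exp (-t^2)
noncomputable def gI : ℝ → ℝ := fun t => (if 0 < t then 1 else 0) * Real.exp (-t^2)
noncomputable def gT : ℝ → ℝ := fun t => t * Real.exp (-t^2)
noncomputable def gIT : ℝ → ℝ := fun t => (if 0 < t then 1 else 0) * (t * Real.exp (-t^2))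

lemma int_gE : Integrable gE := by
  have := integrable_exp_neg_mul_sq (b := 1) one_pos
  unfold gE; simpa using this

lemma int_gT : Integrable gT := by
  have := integrable_mul_exp_neg_mul_sq (b := 1) one_pos
  unfold gT; simpa using this

lemma ind_eq (f : ℝ → ℝ) : (fun t => (if 0 < t then 1 else 0) * f t) = (Ioi (0:ℝ)).indicator f := by
  ext t; simp [indicator_apply, ite_mul]

lemma int_gI : Integrable gI := by
  rw [show gI = (Ioi (0:ℝ)).indicator gE from ind_eq gE]
  exact (int_gE.integrableOn (s := Ioi 0)).integrable_indicator measurableSet_Ioi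

lemma int_gIT : Integrable gIT := by
  rw [show gIT = (Ioi (0:ℝ)).indicator gT from ind_eq gT]
  exact (int_gT.integrableOn (s := Ioi 0)).integrable_indicator measurableSet_Ioi

-- product integral over E3
lemma E3_prod (gg : Fin 3 → ℝ → ℝ) :
    ∫ x : E3, gg 0 (x 0) * gg 1 (x 1) * gg 2 (x 2)
      = (∫ t, gg 0 t) * (∫ t, gg 1 t) * (∫ t, gg 2 t) := by
  rw [← ((EuclideanSpace.volume_preserving_symm_measurableEquiv_toLp (Fin 3)).symm).integral_comp'
    (g := fun x : E3 => gg 0 (x 0) * gg 1 (x 1) * gg 2 (x 2))]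
  have : ∀ y : Fin 3 → ℝ, gg 0 (((MeasurableEquiv.toLp 2 (Fin 3 → ℝ)).symm.symm y : E3) 0)
      * gg 1 (((MeasurableEquiv.toLp 2 (Fin 3 → ℝ)).symm.symm y : E3) 1)
      * gg 2 (((MeasurableEquiv.toLp 2 (Fin 3 → ℝ)).symm.symm y : E3) 2)
      = ∏ i, gg i (y i) := by
    intro y
    rw [Fin.prod_univ_three]
    rfl
  rw [integral_congr_ae (ae_of_all _ this), integral_fintype_prod_volume_eq_prod (f := gg),
    Fin.prod_univ_three]

lemma E3_prod_integrable (gg : Fin 3 → ℝ → ℝ) (h : ∀ i, Integrable (gg i)) :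
    Integrable (fun x : E3 => gg 0 (x 0) * gg 1 (x 1) * gg 2 (x 2)) := by
  have h2 : Integrable (fun y : Fin 3 → ℝ => ∏ i, gg i (y i)) := Integrable.fintype_prod_dep h
  rw [← ((EuclideanSpace.volume_preserving_symm_measurableEquiv_toLp (Fin 3)).symm).integrable_comp_emb
    (MeasurableEquiv.measurableEmbedding _)
    (g := fun x : E3 => gg 0 (x 0) * gg 1 (x 1) * gg 2 (x 2))]
  refine h2.congr (ae_of_all _ fun y => ?_)
  show (∏ i, gg i (y i)) = _
  rw [Fin.prod_univ_three]
  rfl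

lemma norm_sq_E3 (x : E3) : Real.exp (-‖x‖^2) = Real.exp (-(x 0)^2) * Real.exp (-(x 1)^2) * Real.exp (-(x 2)^2) := by
  rw [← Real.exp_add, ← Real.exp_add]
  congr 1
  have : ‖x‖^2 = ∑ i, x i * x i := by
    rw [← real_inner_self_eq_norm_sq]
    simp only [PiLp.inner_apply, RCLike.inner_apply, conj_trivial]
  rw [this, Fin.sum_univ_three]
  ring

-- orthonormal basis with prescribed third vector
lemma exists_basis (u : E3) (hu : ‖u‖ = 1) :
    ∃ b : OrthonormalBasis (Fin 3) ℝ E3, b 2 = u := by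
  have hcard : Module.finrank ℝ E3 = Fintype.card (Fin 3) := by
    simp [finrank_euclideanSpace_fin]
  have horth : Orthonormal ℝ (({2} : Set (Fin 3)).restrict (fun _ : Fin 3 => u)) := by
    constructor
    · intro i; exact hu
    · intro i j hij
      exfalso
      apply hij
      ext
      have hi := i.2; have hj := j.2
      simp only [mem_singleton_iff] at hi hj
      rw [hi, hj]
  obtain ⟨b, hb⟩ := horth.exists_orthonormalBasis_extension_of_card_eq hcard
  exact ⟨b, hb 2 rfl⟩

section Rot
variable (b : OrthonormalBasis (Fin 3) ℝ E3)

lemma rot_inner (x : E3) : ⟪b.repr.symm x, b 2⟫ = x 2 := by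
  rw [real_inner_comm, ← b.repr_apply_apply]
  simp

lemma rot_coord (x : E3) (j : Fin 3) :
    (b.repr.symm x : E3) j = x 0 * b 0 j + x 1 * b 1 j + x 2 * b 2 j := by
  rw [← b.sum_repr_symm]
  have : (∑ i, x i • b i) j = ∑ i, (x i • b i) j := by
    rw [WithLp.ofLp_sum, Finset.sum_apply]
  rw [this, Fin.sum_univ_three]
  simp [PiLp.smul_apply, smul_eq_mul]

end Rot

lemma keyA (u : E3) (hu : ‖u‖ = 1) :
    ∫ x : E3, (if 0 < ⟪x, u⟫ then (1:ℝ) else 0) * Real.exp (-‖x‖^2)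
      = π * (√π / 2) := by
  obtain ⟨b, hb⟩ := exists_basis u hu
  set R := b.repr.symm with hR
  rw [← R.measurePreserving.integral_comp R.toHomeomorph.measurableEmbedding
    (fun x : E3 => (if 0 < ⟪x, u⟫ then (1:ℝ) else 0) * Real.exp (-‖x‖^2))]
  have heq : ∀ x : E3, (if 0 < ⟪R x, u⟫ then (1:ℝ) else 0) * Real.exp (-‖R x‖^2)
      = gE (x 0) * gE (x 1) * gI (x 2) := by
    intro x
    rw [← hb, rot_inner, R.norm_map, norm_sq_E3]
    simp only [gE, gI]
    ring
  rw [integral_congr_ae (ae_of_all _ heq),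
    show (∫ a : E3, gE (a 0) * gE (a 1) * gI (a 2))
      = ∫ a : E3, ![gE, gE, gI] 0 (a 0) * ![gE, gE, gI] 1 (a 1) * ![gE, gE, gI] 2 (a 2) from rfl,
    E3_prod (gg := ![gE, gE, gI])]
  have h1 : ∫ t, gE t = √π := by
    have := integral_gaussian 1; simpa [gE] using this
  have h2 : ∫ t, gI t = √π / 2 := by
    rw [show gI = (Ioi (0:ℝ)).indicator gE from ind_eq gE, integral_indicator measurableSet_Ioi]
    have := integral_gaussian_Ioi 1; simpa [gE] using this
  show (∫ t, gE t) * (∫ t, gE t) * (∫ t, gI t) = _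
  rw [h1, h2, Real.mul_self_sqrt Real.pi_pos.le]

lemma val_gE : ∫ t, gE t = √π := by
  have := integral_gaussian 1; simpa [gE] using this

lemma val_gI : ∫ t, gI t = √π / 2 := by
  rw [show gI = (Ioi (0:ℝ)).indicator gE from ind_eq gE, integral_indicator measurableSet_Ioi]
  have := integral_gaussian_Ioi 1; simpa [gE] using this

lemma val_gT : ∫ t, gT t = 0 := by
  have h := integral_neg_eq_self (fun t : ℝ => t * Real.exp (-t^2)) volume
  simp only [neg_sq, neg_mul] at h
  rw [integral_neg] at h
  have : ∫ t, gT t = ∫ t : ℝ, t * Real.exp (-t^2) := rfl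
  rw [this]; linarith

lemma hasDeriv1 (t : ℝ) : HasDerivAt (fun t : ℝ => -Real.exp (-t^2) / 2) (t * Real.exp (-t^2)) t := by
  have h1 : HasDerivAt (fun t : ℝ => -t^2) (-(2*t)) t := by
    simpa [Pi.neg_def] using ((hasDerivAt_pow 2 t).neg)
  have h2 := (Real.hasDerivAt_exp (-t^2)).comp t h1
  have h3 := (h2.neg).div_const 2
  exact h3.congr_deriv (by ring)

lemma gauss_tendsto : Tendsto (fun t : ℝ => Real.exp (-t^2)) atTop (𝓝 0) := by
  apply Real.tendsto_exp_atBot.comp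
  exact tendsto_neg_atBot_iff.mpr (tendsto_pow_atTop two_ne_zero)

lemma gauss_t_Ioi : ∫ t in Ioi (0:ℝ), t * Real.exp (-t^2) = 1/2 := by
  have := integral_Ioi_of_hasDerivAt_of_nonneg (g := fun t : ℝ => -Real.exp (-t^2) / 2)
    (g' := fun t => t * Real.exp (-t^2)) (a := 0) (l := 0)
    (Continuous.continuousWithinAt (by continuity)) (fun x _ => hasDeriv1 x)
    (fun x hx => mul_nonneg (le_of_lt hx) (Real.exp_pos _).le)
    ?_
  · rw [this]; norm_num
  · have := (gauss_tendsto.neg).div_const 2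
    simpa using this

lemma val_gIT : ∫ t, gIT t = 1/2 := by
  rw [show gIT = (Ioi (0:ℝ)).indicator gT from ind_eq gT, integral_indicator measurableSet_Ioi]
  exact gauss_t_Ioi

lemma E3_prod' (h0 h1 h2 : ℝ → ℝ) :
    ∫ x : E3, h0 (x 0) * (h1 (x 1) * h2 (x 2))
      = (∫ t, h0 t) * ((∫ t, h1 t) * (∫ t, h2 t)) := by
  have := E3_prod ![h0, h1, h2]
  have e1 : (∫ x : E3, h0 (x 0) * (h1 (x 1) * h2 (x 2)))
      = ∫ x : E3, ![h0,h1,h2] 0 (x 0) * ![h0,h1,h2] 1 (x 1) * ![h0,h1,h2] 2 (x 2) := by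
    congr 1; ext x; show _ = h0 (x 0) * h1 (x 1) * h2 (x 2); ring
  rw [e1, this]
  show ((∫ t, h0 t) * ∫ t, h1 t) * ∫ t, h2 t = _
  ring

lemma E3_prod_integrable' (h0 h1 h2 : ℝ → ℝ) (i0 : Integrable h0) (i1 : Integrable h1)
    (i2 : Integrable h2) :
    Integrable (fun x : E3 => h0 (x 0) * (h1 (x 1) * h2 (x 2))) := by
  have := E3_prod_integrable ![h0, h1, h2] (by intro i; fin_cases i <;> assumption)
  refine this.congr (ae_of_all _ fun x => ?_)
  show ![h0,h1,h2] 0 (x 0) * ![h0,h1,h2] 1 (x 1) * ![h0,h1,h2] 2 (x 2) = _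
  show h0 (x 0) * h1 (x 1) * h2 (x 2) = _; ring

lemma keyB (u : E3) (hu : ‖u‖ = 1) (j : Fin 3) :
    ∫ x : E3, (if 0 < ⟪x, u⟫ then (1:ℝ) else 0) * (x j * Real.exp (-‖x‖^2))
      = u j * (π / 2) := by
  obtain ⟨b, hb⟩ := exists_basis u hu
  set R := b.repr.symm with hR
  rw [← R.measurePreserving.integral_comp R.toHomeomorph.measurableEmbedding
    (fun x : E3 => (if 0 < ⟪x, u⟫ then (1:ℝ) else 0) * (x j * Real.exp (-‖x‖^2)))]
  have heq : ∀ x : E3, (if 0 < ⟪R x, u⟫ then (1:ℝ) else 0) * ((R x) j * Real.exp (-‖R x‖^2))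
      = b 0 j * (gT (x 0) * (gE (x 1) * gI (x 2)))
        + b 1 j * (gE (x 0) * (gT (x 1) * gI (x 2)))
        + b 2 j * (gE (x 0) * (gE (x 1) * gIT (x 2))) := by
    intro x
    rw [← hb, rot_inner, R.norm_map, norm_sq_E3, rot_coord]
    simp only [gE, gI, gT, gIT]
    ring
  rw [integral_congr_ae (ae_of_all _ heq)]
  have hP0 := E3_prod_integrable' gT gE gI int_gT int_gE int_gI
  have hP1 := E3_prod_integrable' gE gT gI int_gE int_gT int_gI
  have hP2 := E3_prod_integrable' gE gE gIT int_gE int_gE int_gIT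
  have I1 : ∫ x : E3, (b 0 j * (gT (x 0) * (gE (x 1) * gI (x 2)))
        + b 1 j * (gE (x 0) * (gT (x 1) * gI (x 2))))
        + b 2 j * (gE (x 0) * (gE (x 1) * gIT (x 2)))
      = ((∫ x : E3, b 0 j * (gT (x 0) * (gE (x 1) * gI (x 2))))
          + ∫ x : E3, b 1 j * (gE (x 0) * (gT (x 1) * gI (x 2))))
          + ∫ x : E3, b 2 j * (gE (x 0) * (gE (x 1) * gIT (x 2))) := by
    have hA : Integrable (fun x : E3 => b 0 j * (gT (x 0) * (gE (x 1) * gI (x 2)))) volume :=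
      hP0.const_mul _
    have hB : Integrable (fun x : E3 => b 1 j * (gE (x 0) * (gT (x 1) * gI (x 2)))) volume :=
      hP1.const_mul _
    have hC : Integrable (fun x : E3 => b 2 j * (gE (x 0) * (gE (x 1) * gIT (x 2)))) volume :=
      hP2.const_mul _
    have hAB : Integrable (fun x : E3 => b 0 j * (gT (x 0) * (gE (x 1) * gI (x 2)))
        + b 1 j * (gE (x 0) * (gT (x 1) * gI (x 2)))) volume := hA.add hB
    rw [integral_add hAB hC, integral_add hA hB]
  rw [I1, integral_const_mul, integral_const_mul, integral_const_mul,
    E3_prod', E3_prod', E3_prod', val_gT, val_gE, val_gI, val_gIT, hb]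
  rw [show √π * (√π * (1/2 : ℝ)) = π/2 by
    rw [show √π * (√π * (1/2 : ℝ)) = √π * √π * (1/2) by ring, Real.mul_self_sqrt Real.pi_pos.le]
    ring]
  ring

lemma gauss_cube_Ioi : ∫ t in Ioi (0:ℝ), t^2 * (t * Real.exp (-t^2)) = 1/2 := by
  have hd : ∀ t : ℝ, HasDerivAt (fun t : ℝ => -((t^2+1) * Real.exp (-t^2))/2)
      (t^2 * (t * Real.exp (-t^2))) t := by
    intro t
    have e : HasDerivAt (fun t:ℝ => Real.exp (-t^2)) (Real.exp (-t^2) * -(2*t)) t := by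
      have h1 : HasDerivAt (fun t : ℝ => -t^2) (-(2*t)) t := by
        simpa [Pi.neg_def] using ((hasDerivAt_pow 2 t).neg)
      exact (Real.hasDerivAt_exp (-t^2)).comp t h1
    have p : HasDerivAt (fun t : ℝ => t^2+1) (2*t) t := by
      simpa using (hasDerivAt_pow 2 t).add_const 1
    have h2 := ((p.mul e).neg).div_const 2
    exact h2.congr_deriv (by ring)
  have := integral_Ioi_of_hasDerivAt_of_nonneg
    (g := fun t : ℝ => -((t^2+1) * Real.exp (-t^2))/2)
    (g' := fun t => t^2 * (t * Real.exp (-t^2))) (a := 0) (l := 0)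
    (Continuous.continuousWithinAt (by continuity)) (fun x _ => hd x)
    (fun x hx => mul_nonneg (sq_nonneg x) (mul_nonneg (le_of_lt (mem_Ioi.mp hx)) (Real.exp_pos _).le)) ?_
  · rw [this]; norm_num
  · have h1 : Tendsto (fun t : ℝ => t^2 * Real.exp (-t^2)) atTop (𝓝 0) := by
      have h := (tendsto_rpow_mul_exp_neg_mul_atTop_nhds_zero 1 1 one_pos).comp
        (tendsto_pow_atTop (n := 2) two_ne_zero)
      apply h.congr'
      filter_upwards [eventually_ge_atTop (0:ℝ)] with t ht
      simp only [Function.comp]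
      rw [Real.rpow_one]
      norm_num
    have h2 : Tendsto (fun t : ℝ => Real.exp (-t^2)) atTop (𝓝 0) := gauss_tendsto
    have h3 := ((h1.add h2).neg).div_const 2
    have h4 := h3.congr (f₂ := fun t : ℝ => -((t^2+1) * Real.exp (-t^2))/2) (fun t => by ring)
    simpa using h4

lemma sphere_key1 (u : E3) (hu : ‖u‖ = 1) :
    ∫ k : sphere (0:E3) 1, (if 0 < ⟪(k:E3), u⟫ then (1:ℝ) else 0)
      ∂(volume : Measure E3).toSphere = 2*π := by
  have tr := polar_transfer (f := fun k : sphere (0:E3) 1 => if 0 < ⟪(k:E3), u⟫ then (1:ℝ) else 0)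
    (h := fun r => Real.exp (-r^2))
    (G := fun x => (if 0 < ⟪x, u⟫ then (1:ℝ) else 0) * Real.exp (-‖x‖^2)) ?_
  · rw [keyA u hu, gauss_sq_Ioi] at tr
    have hs : √π ≠ 0 := ne_of_gt (Real.sqrt_pos.mpr Real.pi_pos)
    have key : (∫ k : sphere (0:E3) 1, (if 0 < ⟪(k:E3), u⟫ then (1:ℝ) else 0)
        ∂(volume : Measure E3).toSphere) * √π = 2*π * √π := by linear_combination (-4) * tr
    exact mul_right_cancel₀ hs key
  · intro x
    have hx : (x : E3) ≠ 0 := x.2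
    have hnorm : (0:ℝ) < ‖(x:E3)‖ := norm_pos_iff.mpr hx
    simp only [homeomorphUnitSphereProd_apply_fst_coe]
    have hiff : (0 < ⟪(x:E3), u⟫) ↔ 0 < ⟪‖(x:E3)‖⁻¹ • (x:E3), u⟫ := by
      rw [real_inner_smul_left]
      constructor
      · intro h; exact mul_pos (inv_pos.mpr hnorm) h
      · intro h; nlinarith [inv_pos.mpr hnorm]
    congr 1
    exact if_congr hiff rfl rfl

lemma sphere_key2 (u : E3) (hu : ‖u‖ = 1) (j : Fin 3) :
    ∫ k : sphere (0:E3) 1, (if 0 < ⟪(k:E3), u⟫ then (1:ℝ) else 0) * (k:E3) j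
      ∂(volume : Measure E3).toSphere = π * u j := by
  have tr := polar_transfer
    (f := fun k : sphere (0:E3) 1 => (if 0 < ⟪(k:E3), u⟫ then (1:ℝ) else 0) * (k:E3) j)
    (h := fun r => r * Real.exp (-r^2))
    (G := fun x => (if 0 < ⟪x, u⟫ then (1:ℝ) else 0) * (x j * Real.exp (-‖x‖^2))) ?_
  · rw [keyB u hu j, gauss_cube_Ioi] at tr
    linear_combination (-2) * tr
  · intro x
    have hx : (x : E3) ≠ 0 := x.2
    have hnorm : (0:ℝ) < ‖(x:E3)‖ := norm_pos_iff.mpr hx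
    simp only [homeomorphUnitSphereProd_apply_fst_coe]
    have hiff : (0 < ⟪(x:E3), u⟫) ↔ 0 < ⟪‖(x:E3)‖⁻¹ • (x:E3), u⟫ := by
      rw [real_inner_smul_left]
      constructor
      · intro h; exact mul_pos (inv_pos.mpr hnorm) h
      · intro h; nlinarith [inv_pos.mpr hnorm]
    have hsmul : (‖(x:E3)‖⁻¹ • (x:E3)) j = ‖(x:E3)‖⁻¹ * (x:E3) j := rfl
    by_cases hc : 0 < ⟪(x:E3), u⟫
    · rw [if_pos hc, if_pos (hiff.mp hc), hsmul]
      have hne : ‖(x:E3)‖ ≠ 0 := ne_of_gt hnorm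
      field_simp
    · rw [if_neg hc, if_neg (fun h => hc (hiff.mpr h))]
      simp

lemma coord_abs_le (x : E3) (j : Fin 3) : |x j| ≤ ‖x‖ := by
  have h := abs_real_inner_le_norm (EuclideanSpace.single j (1:ℝ)) x
  rw [EuclideanSpace.inner_single_left] at h
  simpa [EuclideanSpace.norm_single] using h

lemma dotSigma_neg (v : E3) : dotSigma (-v) = -dotSigma v := by
  have h : ∀ j : Fin 3, ((-v) j : ℂ) = -((v j : ℝ) : ℂ) := by
    intro j
    have : (-v) j = -(v j) := rfl
    rw [this, Complex.ofReal_neg]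
  simp only [dotSigma, h 0, h 1, h 2, neg_smul]
  abel

end Aux

/-- Each noisy spin observable `S^n_{1/2}(±) = ½(1 ± ½ n·σ)` is a
postprocessing of the continuous spin-direction POVM `D(X) = (1/4π)∫_X (1 + k·σ) dk` via the
kernel `f_n`; hence the infinite family `{S^n_{1/2}}` over all unit vectors `n` is compatible. -/
theorem noisy_spin_family_compatible
    (nv : EuclideanSpace ℝ (Fin 3)) (hnv : ‖nv‖ = 1) (ε : Bool) :
    (1 / (4 * π)) •
        ∫ k, fKernel nv ε k • ((1 : Mat2) + dotSigma (k : EuclideanSpace ℝ (Fin 3)))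
          ∂sphereMeasure
      = (1 / 2 : ℂ) •
          ((1 : Mat2) + (if ε then (1 / 2 : ℂ) else -(1 / 2 : ℂ)) • dotSigma nv) := by
  classical
  letI : TopologicalSpace Mat2 := PseudoMetricSpace.toUniformSpace.toTopologicalSpace
  haveI : IsFiniteMeasure sphereMeasure := by unfold sphereMeasure; infer_instance
  open scoped RealInnerProductSpace in
  set u : E3 := if ε then nv else -nv with hu_def
  have hu : ‖u‖ = 1 := by cases ε <;> simp [hu_def, hnv]
  have hker : ∀ k : Metric.sphere (0:E3) 1,
      fKernel nv ε k = (if 0 < (inner ℝ (k:E3) u : ℝ) then (1:ℝ) else 0) := by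
    intro k
    cases ε
    · simp only [fKernel, hu_def, if_false, Bool.false_eq_true]
      refine if_congr ?_ rfl rfl
      rw [inner_neg_right, neg_pos]
    · simp only [fKernel, hu_def, if_true]
  set c : Metric.sphere (0:E3) 1 → ℝ := fun k => if 0 < (inner ℝ (k:E3) u : ℝ) then (1:ℝ) else 0
    with hc_def
  have hI : ∀ k : Metric.sphere (0:E3) 1,
      fKernel nv ε k • ((1 : Mat2) + dotSigma (k:E3))
        = c k • (1 : Mat2)
          + ((c k * (k:E3) 0) • sigmaX
            + ((c k * (k:E3) 1) • sigmaY + (c k * (k:E3) 2) • sigmaZ)) := by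
    intro k
    rw [hker k, dotSigma]
    rw [Complex.coe_smul, Complex.coe_smul, Complex.coe_smul]
    module
  have hcm : Measurable c := by
    have hcont : Continuous fun k : Metric.sphere (0:E3) 1 => (inner ℝ (k:E3) u : ℝ) :=
      Continuous.inner continuous_subtype_val continuous_const
    exact Measurable.ite (measurableSet_lt measurable_const hcont.measurable)
      measurable_const measurable_const
  have hcb : ∀ k, |c k| ≤ 1 := by
    intro k; rw [hc_def]; dsimp only; split <;> norm_num
  have hknorm : ∀ k : Metric.sphere (0:E3) 1, ‖(k:E3)‖ = 1 := by
    intro k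
    have := k.2
    rwa [Metric.mem_sphere, dist_zero_right] at this
  have hintc : Integrable c sphereMeasure := by
    refine (integrable_const (1:ℝ)).mono' hcm.aestronglyMeasurable (ae_of_all _ fun k => ?_)
    simpa using hcb k
  have hintj : ∀ j : Fin 3, Integrable (fun k : Metric.sphere (0:E3) 1 => c k * (k:E3) j)
      sphereMeasure := by
    intro j
    have hm : Measurable fun k : Metric.sphere (0:E3) 1 => (k:E3) j :=
      ((EuclideanSpace.proj j).continuous.comp continuous_subtype_val).measurable
    refine (integrable_const (1:ℝ)).mono' (hcm.mul hm).aestronglyMeasurable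
      (ae_of_all _ fun k => ?_)
    have h1 : |(k:E3) j| ≤ 1 := by
      have := coord_abs_le (k:E3) j
      rwa [hknorm k] at this
    have := mul_le_one₀ (hcb k) (abs_nonneg _) h1
    calc ‖c k * (k:E3) j‖ = |c k| * |(k:E3) j| := abs_mul _ _
    _ ≤ 1 := by nlinarith [abs_nonneg (c k), abs_nonneg ((k:E3) j)]
  have hA : Integrable (fun k : Metric.sphere (0:E3) 1 => c k • (1 : Mat2)) sphereMeasure :=
    hintc.smul_const _
  have hX : Integrable (fun k : Metric.sphere (0:E3) 1 => (c k * (k:E3) 0) • sigmaX)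
      sphereMeasure := (hintj 0).smul_const _
  have hY : Integrable (fun k : Metric.sphere (0:E3) 1 => (c k * (k:E3) 1) • sigmaY)
      sphereMeasure := (hintj 1).smul_const _
  have hZ : Integrable (fun k : Metric.sphere (0:E3) 1 => (c k * (k:E3) 2) • sigmaZ)
      sphereMeasure := (hintj 2).smul_const _
  have hYZ : Integrable (fun k : Metric.sphere (0:E3) 1 =>
      (c k * (k:E3) 1) • sigmaY + (c k * (k:E3) 2) • sigmaZ) sphereMeasure := hY.add hZ
  have hXYZ : Integrable (fun k : Metric.sphere (0:E3) 1 =>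
      (c k * (k:E3) 0) • sigmaX
        + ((c k * (k:E3) 1) • sigmaY + (c k * (k:E3) 2) • sigmaZ)) sphereMeasure := hX.add hYZ
  have split : ∫ k, fKernel nv ε k • ((1 : Mat2) + dotSigma (k:E3)) ∂sphereMeasure
      = (∫ k, c k ∂sphereMeasure) • (1 : Mat2)
        + ((∫ k, c k * (k:E3) 0 ∂sphereMeasure) • sigmaX
          + ((∫ k, c k * (k:E3) 1 ∂sphereMeasure) • sigmaY
            + (∫ k, c k * (k:E3) 2 ∂sphereMeasure) • sigmaZ)) := by
    rw [integral_congr_ae (ae_of_all _ hI), integral_add hA hXYZ, integral_add hX hYZ,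
      integral_add hY hZ, integral_smul_const, integral_smul_const, integral_smul_const,
      integral_smul_const]
  have key1 : ∫ k, c k ∂sphereMeasure = 2*π := by
    rw [hc_def, sphereMeasure]; exact sphere_key1 u hu
  have key2 : ∀ j : Fin 3, ∫ k, c k * (k:E3) j ∂sphereMeasure = π * u j := by
    intro j; rw [hc_def, sphereMeasure]; exact sphere_key2 u hu j
  rw [split, key1, key2 0, key2 1, key2 2]
  have hre : ((1/2 : ℝ) : ℂ) = (1/2 : ℂ) := by norm_num
  have hds : (if ε then (1/2:ℂ) else -(1/2:ℂ)) • dotSigma nv = (1/2 : ℝ) • dotSigma u := by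
    cases ε
    · have : u = -nv := by rw [hu_def]; simp
      rw [this, dotSigma_neg, if_neg (by simp), smul_neg, neg_smul, ← hre, Complex.coe_smul]
    · have : u = nv := by rw [hu_def]; simp
      rw [this, if_pos rfl, ← hre, Complex.coe_smul]
  rw [hds, show ((1/2 : ℂ) • ((1 : Mat2) + (1/2 : ℝ) • dotSigma u))
      = (1/2 : ℝ) • ((1 : Mat2) + (1/2 : ℝ) • dotSigma u) from by rw [← hre, Complex.coe_smul],
    dotSigma, Complex.coe_smul, Complex.coe_smul, Complex.coe_smul]
  have hpi : (π : ℝ) ≠ 0 := Real.pi_ne_zero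
  match_scalars
  · field_simp; ring
  · field_simp; ring
  · field_simp; ring
  · field_simp; ring
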